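/- Let B be a C*-algebra and A ⊆ B a closed *-subalgebra such that the set N(A,B) of normalizers spans a dense subspace of B and n*n ∈ A for every normalizer n. Then B = closure(B·A), i.e., the closed linear span of products ba with b ∈ B, a ∈ A equals B. -/

import Mathlib

open Filter Topology

section StateDefs
variable {E : Type*} [NonUnitalNormedRing E] [StarRing E] [NormedSpace ℂ E]

/-- A state on a (possibly non-unital) C*-algebra: a norm-one linear functional
which is positive, i.e. takes nonnegative real values on elements `star b * b`. -/
def IsState (ψ : E →L[ℂ] ℂ) : Prop :=
  ‖ψ‖ = 1 ∧ ∀ b : E, ∃ r : ℝ, 0 ≤ r ∧ ψ (star b * b) = (r : ℂ)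

/-- A pure state: a state which is an extreme point of the state space. -/
def IsPureState (ψ : E →L[ℂ] ℂ) : Prop :=
  IsState ψ ∧ ∀ ψ₁ ψ₂ : E →L[ℂ] ℂ, ∀ t : ℝ, IsState ψ₁ → IsState ψ₂ →
    0 < t → t < 1 → ψ = t • ψ₁ + (1 - t) • ψ₂ → ψ₁ = ψ

end StateDefs

variable {B : Type*} [NonUnitalNormedRing B] [StarRing B] [CStarRing B]
  [NormedSpace ℂ B] [IsScalarTower ℂ B B] [SMulCommClass ℂ B B] [StarModule ℂ B]
  [CompleteSpace B]

section Aux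
variable {C : Type*} [NonUnitalCStarAlgebra C]

variable {C : Type*} [NonUnitalCStarAlgebra C]

/-- A closed non-unital star subalgebra is closed under the non-unital continuous
functional calculus (over `ℝ`). -/
lemma aux_cfcn_mem (A : NonUnitalStarSubalgebra ℂ C) (hA : IsClosed (A : Set C))
    {a : C} (ha : IsSelfAdjoint a) (haA : a ∈ A) (f : ℝ → ℝ)
    (hf : ContinuousOn f (quasispectrum ℝ a)) (hf0 : f 0 = 0) :
    cfcₙ f a ∈ A := by
  rw [cfcₙ_apply f a hf hf0 ha]
  set φ := cfcₙHom (R := ℝ) (a := a) ha with hφ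
  have key : ∀ g : ContinuousMapZero (quasispectrum ℝ a) ℝ, φ g ∈ A := by
    intro g
    induction g using ContinuousMapZero.induction_on_of_compact with
    | zero => rw [map_zero]; exact A.zero_mem
    | id => rw [hφ]; rw [cfcₙHom_id ha]
              ; exact haA
    | star_id =>
        have : (star (ContinuousMapZero.id (quasispectrum ℝ a)) :
            ContinuousMapZero (quasispectrum ℝ a) ℝ)
            = ContinuousMapZero.id (quasispectrum ℝ a) := by
          ext x; simp
        rw [this, hφ]
        rw [cfcₙHom_id ha]
        exact haA
    | add f g hf hg => rw [map_add]; exact A.add_mem hf hg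
    | mul f g hf hg => rw [map_mul]; exact A.mul_mem hf hg
    | smul r g hg =>
        rw [map_smul]
        have : r • φ g = (r : ℂ) • φ g := by
          rw [← smul_one_smul ℂ r (φ g)]; norm_num
        rw [this]
        exact A.smul_mem _ hg
    | frequently g hg =>
        have hgc : g ∈ closure {h : ContinuousMapZero (quasispectrum ℝ a) ℝ | φ h ∈ A} :=
          mem_closure_iff_frequently.mpr hg
        have : φ g ∈ closure (A : Set C) := map_mem_closure (cfcₙHom_continuous ha) hgc (fun h hh => hh)
        rwa [hA.closure_eq] at this
  exact key _


variable {C : Type*} [NonUnitalCStarAlgebra C]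

lemma aux_normalizer_mem (A : NonUnitalStarSubalgebra ℂ C) (hA : IsClosed (A : Set C))
    (hcfc : ∀ {a : C}, IsSelfAdjoint a → a ∈ A → ∀ f : ℝ → ℝ,
      ContinuousOn f (quasispectrum ℝ a) → f 0 = 0 → cfcₙ f a ∈ A)
    {n : C} (haA : star n * n ∈ A) :
    n ∈ closure (Submodule.span ℂ {x : C | ∃ b : C, ∃ a ∈ A, x = b * a} : Set C) := by
  set a := star n * n with ha_def
  have ha : IsSelfAdjoint a := IsSelfAdjoint.star_mul_self n
  set f : ℕ → ℝ → ℝ := fun k x => min 1 ((k : ℝ) * |x|) with hf_def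
  have hfc : ∀ k, Continuous (f k) :=
    fun k => continuous_const.min (continuous_const.mul continuous_abs)
  have hf0 : ∀ k, f k 0 = 0 := fun k => by simp [hf_def]
  set e : ℕ → C := fun k => cfcₙ (f k) a with he_def
  have heA : ∀ k, e k ∈ A := fun k => hcfc ha haA _ (hfc k).continuousOn (hf0 k)
  have he_sa : ∀ k, IsSelfAdjoint (e k) := fun k => cfcₙ_predicate (f k) a
  have key : ∀ k : ℕ, 1 ≤ k → ‖n - n * e k‖ ^ 2 ≤ 1 / (k : ℝ) := by
    intro k hk
    have hkpos : (0 : ℝ) < (k : ℝ) := by exact_mod_cast hk.trans_lt' zero_lt_one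
    have expand : star (n - n * e k) * (n - n * e k)
        = a - a * e k - e k * a + e k * (a * e k) := by
      rw [star_sub, star_mul, (he_sa k).star_eq, ha_def]
      noncomm_ring
    have hae : cfcₙ (fun x : ℝ => x * f k x) a = a * e k := by
      rw [cfcₙ_mul (fun x : ℝ => x) (f k) a (continuousOn_id)
          (by simp) ((hfc k).continuousOn) (hf0 k), cfcₙ_id' ℝ a]
    have hea : cfcₙ (fun x : ℝ => f k x * x) a = e k * a := by
      rw [cfcₙ_mul (f k) (fun x : ℝ => x) a ((hfc k).continuousOn) (hf0 k)
          (continuousOn_id) (by simp), cfcₙ_id' ℝ a]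
    have heae : cfcₙ (fun x : ℝ => f k x * (x * f k x)) a = e k * (a * e k) := by
      rw [cfcₙ_mul (f k) (fun x : ℝ => x * f k x) a ((hfc k).continuousOn) (hf0 k)
          ((continuous_id.mul (hfc k)).continuousOn) (by simp), hae]
    have hcf : cfcₙ (fun x : ℝ => x - x * f k x - f k x * x + f k x * (x * f k x)) a
        = a - a * e k - e k * a + e k * (a * e k) := by
      have c1 : ContinuousOn (fun x : ℝ => x * f k x) (quasispectrum ℝ a) :=
        (continuous_id.mul (hfc k)).continuousOn
      have c2 : ContinuousOn (fun x : ℝ => f k x * x) (quasispectrum ℝ a) :=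
        ((hfc k).mul continuous_id).continuousOn
      have c3 : ContinuousOn (fun x : ℝ => f k x * (x * f k x)) (quasispectrum ℝ a) :=
        ((hfc k).mul (continuous_id.mul (hfc k))).continuousOn
      have c4 : ContinuousOn (fun x : ℝ => x - x * f k x) (quasispectrum ℝ a) :=
        (continuous_id.sub (continuous_id.mul (hfc k))).continuousOn
      have c5 : ContinuousOn (fun x : ℝ => x - x * f k x - f k x * x) (quasispectrum ℝ a) :=
        ((continuous_id.sub (continuous_id.mul (hfc k))).sub
          ((hfc k).mul continuous_id)).continuousOn
      rw [cfcₙ_add (fun x : ℝ => x - x * f k x - f k x * x) (fun x : ℝ => f k x * (x * f k x))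
          a c5 (by simp [hf0 k]) c3 (by simp [hf0 k]),
        cfcₙ_sub (fun x : ℝ => x - x * f k x) (fun x : ℝ => f k x * x) a
          c4 (by simp [hf0 k]) c2 (by simp [hf0 k]),
        cfcₙ_sub (fun x : ℝ => x) (fun x : ℝ => x * f k x) a continuousOn_id (by simp)
          c1 (by simp [hf0 k]),
        cfcₙ_id' ℝ a, hae, hea, heae]
    have hnorm : ‖star (n - n * e k) * (n - n * e k)‖ ≤ 1 / (k : ℝ) := by
      rw [expand, ← hcf]
      apply norm_cfcₙ_le
      intro x hx
      have hrw : x - x * f k x - f k x * x + f k x * (x * f k x)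
          = x * (1 - f k x) ^ 2 := by ring
      rw [hrw]
      simp only [hf_def]
      rcases le_or_gt 1 ((k : ℝ) * |x|) with h | h
      · rw [min_eq_left h]
        rw [sub_self, show ((0:ℝ)) ^ 2 = 0 by ring, mul_zero, norm_zero]
        positivity
      · rw [min_eq_right h.le]
        have h1 : |x| < 1 / (k : ℝ) := by
          rw [lt_div_iff₀ hkpos, mul_comm]; exact h
        have h2 : (0 : ℝ) ≤ (k : ℝ) * |x| := by positivity
        have h3 : (abs (1 - (k : ℝ) * |x|)) ^ 2 ≤ 1 := by
          rw [abs_of_nonneg (by linarith : (0:ℝ) ≤ 1 - (k : ℝ) * |x|)]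
          nlinarith
        calc ‖x * (1 - (k : ℝ) * |x|) ^ 2‖
            = |x| * (abs (1 - (k : ℝ) * |x|)) ^ 2 := by
              rw [Real.norm_eq_abs, abs_mul, abs_pow]
          _ ≤ |x| * 1 := by gcongr
          _ ≤ 1 / (k : ℝ) := by rw [mul_one]; exact h1.le
    calc ‖n - n * e k‖ ^ 2 = ‖star (n - n * e k) * (n - n * e k)‖ := by
          rw [CStarRing.norm_star_mul_self]; ring
      _ ≤ 1 / (k : ℝ) := hnorm
  have h2 : Tendsto (fun k : ℕ => ‖n - n * e k‖ ^ 2) atTop (𝓝 0) :=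
    squeeze_zero' (.of_forall fun k => by positivity)
      (eventually_atTop.mpr ⟨1, key⟩) tendsto_one_div_atTop_nhds_zero_nat
  have h3 : Tendsto (fun k : ℕ => ‖n - n * e k‖) atTop (𝓝 0) := by
    have := (Real.continuous_sqrt.tendsto 0).comp h2
    simpa [Function.comp_def, Real.sqrt_sq (norm_nonneg _)] using this
  have h4 : Tendsto (fun k : ℕ => n * e k) atTop (𝓝 n) := by
    rw [tendsto_iff_norm_sub_tendsto_zero]
    simpa [norm_sub_rev] using h3
  exact mem_closure_of_tendsto h4
    (.of_forall fun k => Submodule.subset_span ⟨n, e k, heA k, rfl⟩)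

end Aux

/-- If the normalizers span a dense subspace of `B` and `star n * n ∈ A` for every
normalizer `n`, then the closed linear span of products `b * a` (`b ∈ B`, `a ∈ A`)
is all of `B`. -/
theorem closure_span_mul_eq_univ
    (A : NonUnitalStarSubalgebra ℂ B) (hA : IsClosed (A : Set B))
    (hdense : Dense (Submodule.span ℂ
      {b : B | ∀ a ∈ A, star b * a * b ∈ A ∧ b * a * star b ∈ A} : Set B))
    (hsq : ∀ n : B, (∀ a ∈ A, star n * a * n ∈ A ∧ n * a * star n ∈ A) →
      star n * n ∈ A) :
    closure (Submodule.span ℂ {x : B | ∃ b : B, ∃ a ∈ A, x = b * a} : Set B) =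
      Set.univ := by
  letI : NonUnitalCStarAlgebra B :=
    { ‹NonUnitalNormedRing B›, ‹StarRing B›, ‹CStarRing B›, ‹NormedSpace ℂ B›,
      ‹IsScalarTower ℂ B B›, ‹SMulCommClass ℂ B B›, ‹StarModule ℂ B›,
      ‹CompleteSpace B› with }
  have hsub : {b : B | ∀ a ∈ A, star b * a * b ∈ A ∧ b * a * star b ∈ A} ⊆
      closure (Submodule.span ℂ {x : B | ∃ b : B, ∃ a ∈ A, x = b * a} : Set B) :=
    fun n hn => aux_normalizer_mem A hA (fun ha haA f hf hf0 => aux_cfcn_mem A hA ha haA f hf hf0)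
      (hsq n hn)
  have hle : Submodule.span ℂ {b : B | ∀ a ∈ A, star b * a * b ∈ A ∧ b * a * star b ∈ A} ≤
      (Submodule.span ℂ {x : B | ∃ b : B, ∃ a ∈ A, x = b * a}).topologicalClosure :=
    Submodule.span_le.mpr hsub
  apply Set.eq_univ_of_univ_subset
  calc Set.univ
      = closure (Submodule.span ℂ
          {b : B | ∀ a ∈ A, star b * a * b ∈ A ∧ b * a * star b ∈ A} : Set B) :=
        hdense.closure_eq.symm
    _ ⊆ closure ((Submodule.span ℂ
          {x : B | ∃ b : B, ∃ a ∈ A, x = b * a}).topologicalClosure : Set B) :=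
        closure_mono hle
    _ = closure (Submodule.span ℂ {x : B | ∃ b : B, ∃ a ∈ A, x = b * a} : Set B) := by
        rw [Submodule.topologicalClosure_coe, closure_closure]
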